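/- arXiv:2510.11266 — 3 statements merged into one kernel-verified Lean document; each statement's English description precedes it below -/
import Mathlib

section
/- Calculus key inequality: let g : ℝ_{≥0} → ℝ_{≥0} be differentiable, concave, non-decreasing with g(0) = 0. Then ∫₀¹ e^t ((1+t)·g(1/t) − (1/t)·g'(1/t)) dt ≤ e·g(1). -/
noncomputable section

theorem stmt9 (g : ℝ → ℝ)
    (hconc : ConcaveOn ℝ (Set.Ici (0:ℝ)) g)
    (hmono : MonotoneOn g (Set.Ici (0:ℝ)))
    (hnonneg : ∀ u : ℝ, 0 ≤ u → 0 ≤ g u)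
    (hdiff : ∀ u : ℝ, 0 ≤ u → DifferentiableAt ℝ g u)
    (hg0 : g 0 = 0) :
    ∫ t in (0:ℝ)..1, Real.exp t * ((1 + t) * g (1/t) - (1/t) * deriv g (1/t))
      ≤ Real.exp 1 * g 1 := by
  set f : ℝ → ℝ := fun t => Real.exp t * ((1 + t) * g (1/t) - (1/t) * deriv g (1/t)) with hf
  set H : ℝ → ℝ := fun t => t * Real.exp t * g (1/t) with hH
  have hgnn1 : (0:ℝ) ≤ Real.exp 1 * g 1 :=
    mul_nonneg (Real.exp_pos 1).le (hnonneg 1 zero_le_one)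
  -- key derivative computation
  have keyD : ∀ t : ℝ, 0 < t → HasDerivAt H (f t) t := by
    intro t ht
    have hinv : HasDerivAt (fun x : ℝ => 1 / x) (-(t ^ 2)⁻¹) t := by
      simpa [one_div] using hasDerivAt_inv ht.ne'
    have hg' : HasDerivAt g (deriv g (1/t)) (1/t) :=
      (hdiff (1/t) (by positivity)).hasDerivAt
    have hcomp : HasDerivAt (fun x : ℝ => g (1 / x)) (deriv g (1/t) * (-(t ^ 2)⁻¹)) t :=
      hg'.comp t hinv
    have hte : HasDerivAt (fun x : ℝ => x * Real.exp x) (1 * Real.exp t + t * Real.exp t) t :=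
      (hasDerivAt_id t).mul (Real.hasDerivAt_exp t)
    have := hte.mul hcomp
    have key : t * (t ^ 2)⁻¹ = t⁻¹ := by
      rw [sq, mul_inv, ← mul_assoc, mul_inv_cancel₀ ht.ne', one_mul]
    refine this.congr_deriv (Eq.symm ?_)
    simp only [hf, one_div]
    linear_combination Real.exp t * deriv g t⁻¹ * key
  by_cases hint : IntervalIntegrable f MeasureTheory.volume 0 1
  · -- integrable case
    have hIccInt : MeasureTheory.IntegrableOn f (Set.uIcc 0 1) MeasureTheory.volume := by
      rw [Set.uIcc_of_le (zero_le_one' ℝ)]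
      exact (intervalIntegrable_iff_integrableOn_Icc_of_le zero_le_one).mp hint
    have hcont : ContinuousOn (fun x => ∫ t in x..1, f t) (Set.uIcc (0:ℝ) 1) :=
      intervalIntegral.continuousOn_primitive_interval_left hIccInt
    have h0mem : (0:ℝ) ∈ Set.uIcc (0:ℝ) 1 := Set.left_mem_uIcc
    have hT : Filter.Tendsto (fun x => ∫ t in x..1, f t) (nhdsWithin 0 (Set.uIcc (0:ℝ) 1))
        (nhds (∫ t in (0:ℝ)..1, f t)) := hcont 0 h0mem
    have hT' : Filter.Tendsto (fun x => ∫ t in x..1, f t) (nhdsWithin 0 (Set.Ioo (0:ℝ) 1))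
        (nhds (∫ t in (0:ℝ)..1, f t)) :=
      hT.mono_left (nhdsWithin_mono 0 (by rw [Set.uIcc_of_le (zero_le_one' ℝ)]; exact Set.Ioo_subset_Icc_self))
    have hNB : (nhdsWithin (0:ℝ) (Set.Ioo (0:ℝ) 1)).NeBot := by
      refine mem_closure_iff_nhdsWithin_neBot.mp ?_
      rw [closure_Ioo one_ne_zero.symm]
      exact Set.left_mem_Icc.mpr zero_le_one
    refine le_of_tendsto hT' ?_
    filter_upwards [self_mem_nhdsWithin] with ε hε
    obtain ⟨hε0, hε1⟩ := hε
    have hsub : Set.uIcc ε 1 ⊆ Set.uIcc (0:ℝ) 1 :=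
      Set.uIcc_subset_uIcc (by rw [Set.uIcc_of_le (zero_le_one' ℝ)]; exact ⟨hε0.le, hε1.le⟩) Set.right_mem_uIcc
    have hint' : IntervalIntegrable f MeasureTheory.volume ε 1 := hint.mono_set hsub
    have heq : ∫ t in ε..1, f t = H 1 - H ε := by
      refine intervalIntegral.integral_eq_sub_of_hasDerivAt (fun t ht => ?_) hint'
      rw [Set.uIcc_of_le hε1.le] at ht
      exact keyD t (lt_of_lt_of_le hε0 ht.1)
    rw [heq]
    have hHε : 0 ≤ H ε := by
      have : (0:ℝ) ≤ g (1/ε) := hnonneg _ (by positivity)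
      have := mul_nonneg (mul_nonneg hε0.le (Real.exp_pos ε).le) this
      simpa [hH] using this
    have hH1 : H 1 = Real.exp 1 * g 1 := by simp [hH]
    rw [hH1]
    linarith
  · rw [intervalIntegral.integral_undef hint]
    exact hgnn1
end
end

section
/- Let f : ℝ_{≥0}^m → ℝ_{≥0} be a differentiable CDR-valuation (concave, monotone non-decreasing, f(0)=0, ∇f coordinatewise non-increasing), define f̂(α) = sup_{x ≥ 0}(f(x) − ⟨α,x⟩) and U(x) = (1/(e−1)) ∫₀¹ e^t · t·f(x/t) dt. Then for all x ∈ ℝ_{≥0}^m: (e/(e−1))·f(x) ≥ U(x) + f̂(∇U(x)). That is, U is (1 − 1/e)-balanced with respect to f. -/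
open RealInnerProductSpace Set Filter Topology intervalIntegral MeasureTheory

noncomputable section

lemma deriv_ge_of_slope {ψ : ℝ → ℝ} {d c : ℝ} (hd : HasDerivAt ψ d 0)
    (h : ∀ r ∈ Ioc (0:ℝ) 1, c ≤ (ψ r - ψ 0) / r) : c ≤ d := by
  have ht : Tendsto (slope ψ 0) (𝓝[>] 0) (𝓝 d) :=
    (hasDerivAt_iff_tendsto_slope.1 hd).mono_left
      (nhdsWithin_mono _ (fun r hr => ne_of_gt hr))
  refine ge_of_tendsto ht ?_
  filter_upwards [Ioc_mem_nhdsGT one_pos] with r hr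
  simpa [slope_def_field, div_eq_mul_inv] using h r hr

lemma concave_grad_ineq {E : Type*} [NormedAddCommGroup E] [InnerProductSpace ℝ E]
    [CompleteSpace E]
    {S : Set E} {F : E → ℝ} (hF : ConcaveOn ℝ S F) {a b : E} (ha : a ∈ S) (hb : b ∈ S)
    {g : E} (hg : HasGradientAt F g a) : F b ≤ F a + ⟪g, b - a⟫ := by
  have hline : HasDerivAt (fun r : ℝ => a + r • (b - a)) (b - a) 0 := by
    simpa using ((hasDerivAt_id (0:ℝ)).smul_const (b - a)).const_add a
  have hg' : HasFDerivAt F ((InnerProductSpace.toDual ℝ E) g) (a + (0:ℝ) • (b - a)) := by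
    simpa using hg.hasFDerivAt
  have hψ : HasDerivAt (fun r : ℝ => F (a + r • (b - a))) ⟪g, b - a⟫ 0 := by
    simpa [InnerProductSpace.toDual_apply_apply, Function.comp_def] using (hg'.comp_hasDerivAt 0 hline)
  have key : F b - F a ≤ ⟪g, b - a⟫ := by
    refine deriv_ge_of_slope hψ (fun r hr => ?_)
    have hcomb := hF.2 ha hb (by linarith [hr.2] : (0:ℝ) ≤ 1 - r) hr.1.le (by ring)
    have heq : (1 - r) • a + r • b = a + r • (b - a) := by module
    rw [heq] at hcomb
    simp only [smul_eq_mul] at hcomb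
    rw [le_div_iff₀ hr.1]
    have h0 : F (a + (0:ℝ) • (b - a)) = F a := by simp
    rw [h0]
    nlinarith
  linarith

lemma grad_dir_nonneg {E : Type*} [NormedAddCommGroup E] [InnerProductSpace ℝ E]
    [CompleteSpace E] {F : E → ℝ} {w v g : E}
    (hm : ∀ r ∈ Icc (0:ℝ) 1, F w ≤ F (w + r • v))
    (hg : HasGradientAt F g w) : 0 ≤ ⟪g, v⟫ := by
  have hline : HasDerivAt (fun r : ℝ => w + r • v) v 0 := by
    simpa using ((hasDerivAt_id (0:ℝ)).smul_const v).const_add w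
  have hg' : HasFDerivAt F ((InnerProductSpace.toDual ℝ E) g) (w + (0:ℝ) • v) := by
    simpa using hg.hasFDerivAt
  have hψ : HasDerivAt (fun r : ℝ => F (w + r • v)) ⟪g, v⟫ 0 := by
    simpa [InnerProductSpace.toDual_apply_apply, Function.comp_def] using (hg'.comp_hasDerivAt 0 hline)
  refine deriv_ge_of_slope hψ (fun r hr => ?_)
  have h1 := hm r ⟨hr.1.le, hr.2⟩
  have h0 : F (w + (0:ℝ) • v) = F w := by simp
  rw [h0]
  exact div_nonneg (by linarith) hr.1.le

set_option maxHeartbeats 2000000 in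
theorem stmt14 {m : ℕ} (f : EuclideanSpace ℝ (Fin m) → ℝ)
    (gf : EuclideanSpace ℝ (Fin m) → EuclideanSpace ℝ (Fin m))
    (hf0 : f 0 = 0)
    (hconc : ConcaveOn ℝ {x : EuclideanSpace ℝ (Fin m) | ∀ i, 0 ≤ x i} f)
    (hnonneg : ∀ x : EuclideanSpace ℝ (Fin m), (∀ i, 0 ≤ x i) → 0 ≤ f x)
    (hmono : ∀ x y : EuclideanSpace ℝ (Fin m),
      (∀ i, 0 ≤ x i) → (∀ i, x i ≤ y i) → f x ≤ f y)
    (hgrad : ∀ y : EuclideanSpace ℝ (Fin m), (∀ i, 0 ≤ y i) → HasGradientAt f (gf y) y)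
    (hganti : ∀ x y : EuclideanSpace ℝ (Fin m),
      (∀ i, 0 ≤ x i) → (∀ i, x i ≤ y i) → ∀ i, gf y i ≤ gf x i)
    (fhat : EuclideanSpace ℝ (Fin m) → ℝ)
    (hfhat : ∀ α, fhat α =
      sSup ((fun x => f x - ⟪α, x⟫) '' {x : EuclideanSpace ℝ (Fin m) | ∀ i, 0 ≤ x i}))
    (U : EuclideanSpace ℝ (Fin m) → ℝ)
    (hU : ∀ x, U x = (Real.exp 1 - 1)⁻¹ *
      ∫ t in (0:ℝ)..1, Real.exp t * (t * f (t⁻¹ • x)))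
    (gU : EuclideanSpace ℝ (Fin m) → EuclideanSpace ℝ (Fin m))
    (hgU : ∀ x : EuclideanSpace ℝ (Fin m), (∀ i, 0 ≤ x i) → HasGradientAt U (gU x) x) :
    ∀ x : EuclideanSpace ℝ (Fin m), (∀ i, 0 ≤ x i) →
      U x + fhat (gU x) ≤ (Real.exp 1 / (Real.exp 1 - 1)) * f x := by
  intro x hx
  have hem1 : (0:ℝ) < Real.exp 1 - 1 := by nlinarith [Real.add_one_le_exp (1:ℝ)]
  have hcnn : (0:ℝ) ≤ (Real.exp 1 - 1)⁻¹ := inv_nonneg.2 hem1.le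
  set S : Set (EuclideanSpace ℝ (Fin m)) := {x : EuclideanSpace ℝ (Fin m) | ∀ i, 0 ≤ x i}
    with hSdef
  have h0S : (0 : EuclideanSpace ℝ (Fin m)) ∈ S := by intro i; simp
  have hxS : x ∈ S := hx
  have hsmulS : ∀ (t : ℝ), 0 ≤ t → ∀ w ∈ S, t • w ∈ S := by
    intro t ht w hw i
    simpa using mul_nonneg ht (hw i)
  have hSconv : Convex ℝ S := by
    intro w hw v hv a b ha hb _
    intro i
    simpa using add_nonneg (mul_nonneg ha (hw i)) (mul_nonneg hb (hv i))
  -- nonnegativity of f at scaled points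
  have hfnn : ∀ (t : ℝ), 0 ≤ t → ∀ w ∈ S, 0 ≤ f (t⁻¹ • w) := by
    intro t ht w hw
    exact hnonneg _ (hsmulS t⁻¹ (inv_nonneg.2 ht) w hw)
  -- monotonicity of t ↦ t * f (t⁻¹ w)
  have hM : ∀ w ∈ S, MonotoneOn (fun t : ℝ => t * f (t⁻¹ • w)) (Icc 0 1) := by
    intro w hw t₁ h₁ t₂ h₂ h12
    dsimp only
    rcases eq_or_lt_of_le h₁.1 with h0 | hpos₁
    · rw [← h0, zero_mul]
      exact mul_nonneg h₂.1 (hfnn t₂ h₂.1 w hw)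
    · have hpos₂ : 0 < t₂ := lt_of_lt_of_le hpos₁ h12
      have hmem : t₁⁻¹ • w ∈ S := hsmulS t₁⁻¹ (inv_nonneg.2 hpos₁.le) w hw
      have ha : (0:ℝ) ≤ t₁ / t₂ := div_nonneg hpos₁.le hpos₂.le
      have hb : (0:ℝ) ≤ 1 - t₁ / t₂ := by
        have : t₁ / t₂ ≤ 1 := (div_le_one hpos₂).2 h12
        linarith
      have hcomb := hconc.2 hmem h0S ha hb (by ring)
      rw [smul_zero, add_zero, smul_smul] at hcomb
      have he : t₁ / t₂ * t₁⁻¹ = t₂⁻¹ := by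
        field_simp
      rw [he] at hcomb
      simp only [smul_eq_mul, hf0, mul_zero, add_zero] at hcomb
      have := mul_le_mul_of_nonneg_left hcomb hpos₂.le
      have he2 : t₂ * (t₁ / t₂ * f (t₁⁻¹ • w)) = t₁ * f (t₁⁻¹ • w) := by
        field_simp
      linarith [he2 ▸ this]
  -- integrability of H w
  have hHint : ∀ w ∈ S, IntervalIntegrable
      (fun t : ℝ => Real.exp t * (t * f (t⁻¹ • w))) volume 0 1 := by
    intro w hw
    apply MonotoneOn.intervalIntegrable
    rw [uIcc_of_le zero_le_one]
    intro t₁ h₁ t₂ h₂ h12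
    dsimp only
    have hMle := hM w hw h₁ h₂ h12
    have hMnn : 0 ≤ t₁ * f (t₁⁻¹ • w) := mul_nonneg h₁.1 (hfnn t₁ h₁.1 w hw)
    exact mul_le_mul (Real.exp_le_exp.2 h12) hMle hMnn (Real.exp_pos t₂).le
  -- key calculus inequality via FTC
  have hkeycalc : ∀ z ∈ S,
      IntervalIntegrable (fun t : ℝ =>
        Real.exp t * (f (t⁻¹ • z) - t⁻¹ * ⟪gf (t⁻¹ • z), z⟫)) volume 0 1 ∧
      (∫ t in (0:ℝ)..1, Real.exp t * (f (t⁻¹ • z) - t⁻¹ * ⟪gf (t⁻¹ • z), z⟫)) +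
        (∫ t in (0:ℝ)..1, Real.exp t * (t * f (t⁻¹ • z))) ≤ Real.exp 1 * f z := by
    intro z hz
    set H : ℝ → ℝ := fun t => Real.exp t * (t * f (t⁻¹ • z)) with hHdef
    set H' : ℝ → ℝ := fun t =>
      Real.exp t * ((1 + t) * f (t⁻¹ • z) - t⁻¹ * ⟪gf (t⁻¹ • z), z⟫) with hH'def
    have hasd : ∀ t ∈ Ioc (0:ℝ) 1, HasDerivAt H (H' t) t := by
      intro t ht
      have htne : t ≠ 0 := ht.1.ne'
      have hmem : t⁻¹ • z ∈ S := hsmulS _ (inv_nonneg.2 ht.1.le) z hz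
      have hc : HasDerivAt (fun u : ℝ => u⁻¹ • z) (-((t^2)⁻¹) • z) t := by
        simpa using (hasDerivAt_inv htne).smul_const z
      have hg' : HasFDerivAt f ((InnerProductSpace.toDual ℝ _) (gf (t⁻¹ • z))) (t⁻¹ • z) :=
        (hgrad _ hmem).hasFDerivAt
      have hfc : HasDerivAt (fun u : ℝ => f (u⁻¹ • z))
          (-((t^2)⁻¹) * ⟪gf (t⁻¹ • z), z⟫) t := by
        have h2 := hg'.comp_hasDerivAt t hc
        have h3 : (InnerProductSpace.toDual ℝ (EuclideanSpace ℝ (Fin m))) (gf (t⁻¹ • z))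
            (-((t^2)⁻¹) • z) = -((t^2)⁻¹) * ⟪gf (t⁻¹ • z), z⟫ := by
          rw [InnerProductSpace.toDual_apply_apply, real_inner_smul_right]
        rw [h3] at h2
        exact h2
      have hMd : HasDerivAt (fun u : ℝ => u * f (u⁻¹ • z))
          (1 * f (t⁻¹ • z) + t * (-((t^2)⁻¹) * ⟪gf (t⁻¹ • z), z⟫)) t :=
        (hasDerivAt_id t).mul hfc
      have hHd := (Real.hasDerivAt_exp t).mul hMd
      refine hHd.congr_deriv ?_
      rw [hH'def]
      dsimp only
      field_simp
      ring
    have hpos : ∀ t ∈ Ioo (0:ℝ) 1, 0 ≤ H' t := by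
      intro t ht
      have hmem : t⁻¹ • z ∈ S := hsmulS _ (inv_nonneg.2 ht.1.le) z hz
      have hkey := concave_grad_ineq hconc hmem h0S (hgrad _ hmem)
      rw [hf0, zero_sub, inner_neg_right] at hkey
      have hpz : t⁻¹ * ⟪gf (t⁻¹ • z), z⟫ = ⟪gf (t⁻¹ • z), t⁻¹ • z⟫ :=
        (real_inner_smul_right _ _ _).symm
      have hfw := hnonneg _ hmem
      rw [hH'def]
      dsimp only
      rw [hpz]
      have h1 : ⟪gf (t⁻¹ • z), t⁻¹ • z⟫ ≤ f (t⁻¹ • z) := by linarith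
      have h2 : 0 ≤ (1 + t) * f (t⁻¹ • z) - ⟪gf (t⁻¹ • z), t⁻¹ • z⟫ := by
        nlinarith [mul_nonneg ht.1.le hfw]
      exact mul_nonneg (Real.exp_pos t).le h2
    set L₀ : ℝ := sInf ((fun t : ℝ => t * f (t⁻¹ • z)) '' Ioo 0 1) with hL₀def
    have hne : (Ioo (0:ℝ) 1).Nonempty := ⟨1/2, by norm_num⟩
    have hbdd : BddBelow ((fun t : ℝ => t * f (t⁻¹ • z)) '' Ioo 0 1) := by
      refine ⟨0, ?_⟩
      rintro _ ⟨t, ht, rfl⟩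
      exact mul_nonneg ht.1.le (hfnn t ht.1.le z hz)
    have hL0nn : 0 ≤ L₀ := by
      refine le_csInf (hne.image _) ?_
      rintro _ ⟨t, ht, rfl⟩
      exact mul_nonneg ht.1.le (hfnn t ht.1.le z hz)
    have htM : Tendsto (fun t : ℝ => t * f (t⁻¹ • z)) (𝓝[>] 0) (𝓝 L₀) :=
      MonotoneOn.tendsto_nhdsWithin_Ioo_right hne
        ((hM z hz).mono Ioo_subset_Icc_self) hbdd
    have htH : Tendsto H (𝓝[>] (0:ℝ)) (𝓝 (Real.exp 0 * L₀)) :=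
      ((Real.continuous_exp.tendsto 0).mono_left nhdsWithin_le_nhds).mul htM
    have htH1 : Tendsto H (𝓝[<] (1:ℝ)) (𝓝 (H 1)) :=
      (hasd 1 ⟨one_pos, le_refl 1⟩).continuousAt.continuousWithinAt
    -- integrability of H' via a continuous modification of H
    have hint' : IntervalIntegrable H' volume 0 1 := by
      set G : ℝ → ℝ := Function.update H 0 (Real.exp 0 * L₀) with hGdef
      have hGne : ∀ t : ℝ, t ≠ 0 → G t = H t := by
        intro t ht; rw [hGdef]; exact Function.update_of_ne ht _ _
      have hGcont : ContinuousOn G (uIcc (0:ℝ) 1) := by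
        rw [uIcc_of_le zero_le_one]
        intro t ht
        rcases eq_or_ne t 0 with rfl | htne
        · have hsub : Icc (0:ℝ) 1 ⊆ insert 0 (Ioc 0 1) := by
            intro u hu
            rcases eq_or_ne u 0 with rfl | hu0
            · exact mem_insert _ _
            · exact mem_insert_of_mem _ ⟨lt_of_le_of_ne hu.1 (Ne.symm hu0), hu.2⟩
          have hG0 : G 0 = Real.exp 0 * L₀ := by rw [hGdef]; simp
          refine ContinuousWithinAt.mono ?_ hsub
          unfold ContinuousWithinAt
          rw [nhdsWithin_insert, hG0]
          refine Tendsto.sup ?_ ?_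
          · simpa [hG0] using tendsto_pure_nhds G 0
          · refine Filter.Tendsto.congr' ?_ (htH.mono_left (nhdsWithin_mono _ Ioc_subset_Ioi_self))
            filter_upwards [self_mem_nhdsWithin] with u hu
            exact (hGne u hu.1.ne').symm
        · have htpos : 0 < t := lt_of_le_of_ne ht.1 (Ne.symm htne)
          have hca : ContinuousAt H t := (hasd t ⟨htpos, ht.2⟩).continuousAt
          have : ContinuousAt G t := by
            refine hca.congr ?_
            filter_upwards [eventually_ne_nhds htne] with u hu
            exact (hGne u hu).symm
          exact this.continuousWithinAt
      have hGderiv : ∀ t ∈ Ioo (min (0:ℝ) 1) (max 0 1), HasDerivAt G (H' t) t := by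
        rw [min_eq_left zero_le_one, max_eq_right zero_le_one]
        intro t ht
        refine (hasd t ⟨ht.1, ht.2.le⟩).congr_of_eventuallyEq ?_
        filter_upwards [eventually_ne_nhds ht.1.ne'] with u hu
        exact hGne u hu
      have hGpos : ∀ t ∈ Ioo (min (0:ℝ) 1) (max 0 1), 0 ≤ H' t := by
        rw [min_eq_left zero_le_one, max_eq_right zero_le_one]
        exact hpos
      exact intervalIntegrable_deriv_of_nonneg hGcont hGderiv hGpos
    have hFTC : (∫ t in (0:ℝ)..1, H' t) = H 1 - Real.exp 0 * L₀ :=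
      integral_eq_sub_of_hasDerivAt_of_tendsto one_pos
        (fun t ht => hasd t ⟨ht.1, ht.2.le⟩) hint' htH htH1
    have hH1 : H 1 = Real.exp 1 * f z := by
      rw [hHdef]; simp
    have hQeq : (fun t : ℝ => Real.exp t * (f (t⁻¹ • z) - t⁻¹ * ⟪gf (t⁻¹ • z), z⟫)) =
        fun t => H' t - H t := by
      funext t
      rw [hH'def, hHdef]
      dsimp only
      ring
    constructor
    · rw [hQeq]
      exact hint'.sub (hHint z hz)
    · rw [hQeq, intervalIntegral.integral_sub hint' (hHint z hz)]
      have : (∫ t in (0:ℝ)..1, H' t) ≤ Real.exp 1 * f z := by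
        rw [hFTC, hH1]
        nlinarith [Real.exp_pos (0:ℝ), hL0nn, (by norm_num : Real.exp 0 = 1)]
      linarith

  -- gradient of f is componentwise nonnegative on S
  have hgfnn : ∀ w ∈ S, ∀ i, 0 ≤ gf w i := by
    intro w hw i
    have hm : ∀ r ∈ Icc (0:ℝ) 1, f w ≤ f (w + r • EuclideanSpace.single i (1:ℝ)) := by
      intro r hr
      refine hmono w _ hw (fun j => ?_)
      have he : (w + r • EuclideanSpace.single i (1:ℝ)) j
          = w j + r * (EuclideanSpace.single i (1:ℝ)) j := rfl
      rw [he]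
      have hnn : 0 ≤ r * (EuclideanSpace.single i (1:ℝ)) j := by
        refine mul_nonneg hr.1 ?_
        rw [EuclideanSpace.single_apply]
        split <;> norm_num
      linarith
    have h2 := grad_dir_nonneg hm (hgrad w hw)
    rwa [EuclideanSpace.inner_single_right, starRingEnd_apply, star_trivial, one_mul] at h2
  -- inner product with a nonnegative vector is monotone
  have hinnermono : ∀ y ∈ S, ∀ a b : EuclideanSpace ℝ (Fin m),
      (∀ i, a i ≤ b i) → ⟪a, y⟫ ≤ ⟪b, y⟫ := by
    intro y hy a b hab
    simp only [PiLp.inner_apply, RCLike.inner_apply, starRingEnd_apply, star_trivial]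
    exact Finset.sum_le_sum (fun i _ => mul_le_mul_of_nonneg_left (hab i) (hy i))
  -- U is concave on S
  have hUconc : ConcaveOn ℝ S U := by
    refine ⟨hSconv, fun w₁ h₁ w₂ h₂ a b ha hb hab => ?_⟩
    rw [hU, hU, hU, smul_eq_mul, smul_eq_mul]
    have hint1 := hHint w₁ h₁
    have hint2 := hHint w₂ h₂
    have hintc : IntervalIntegrable (fun t : ℝ =>
        a * (Real.exp t * (t * f (t⁻¹ • w₁))) + b * (Real.exp t * (t * f (t⁻¹ • w₂))))
        volume 0 1 := (hint1.const_mul a).add (hint2.const_mul b)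
    have hmem12 : a • w₁ + b • w₂ ∈ S := hSconv h₁ h₂ ha hb hab
    have hle : ∀ t ∈ Icc (0:ℝ) 1,
        a * (Real.exp t * (t * f (t⁻¹ • w₁))) + b * (Real.exp t * (t * f (t⁻¹ • w₂)))
          ≤ Real.exp t * (t * f (t⁻¹ • (a • w₁ + b • w₂))) := by
      intro t ht
      rcases eq_or_lt_of_le ht.1 with h0 | htpos
      · rw [← h0]
        simp
      · have hm1 : t⁻¹ • w₁ ∈ S := hsmulS _ (inv_nonneg.2 ht.1) w₁ h₁
        have hm2 : t⁻¹ • w₂ ∈ S := hsmulS _ (inv_nonneg.2 ht.1) w₂ h₂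
        have hcomb := hconc.2 hm1 hm2 ha hb hab
        rw [smul_eq_mul, smul_eq_mul] at hcomb
        have he : a • (t⁻¹ • w₁) + b • (t⁻¹ • w₂) = t⁻¹ • (a • w₁ + b • w₂) := by
          rw [smul_add, smul_comm a, smul_comm b]
        rw [he] at hcomb
        have het : 0 ≤ Real.exp t * t := mul_nonneg (Real.exp_pos t).le ht.1
        nlinarith [mul_le_mul_of_nonneg_left hcomb het]
    have hcompare := intervalIntegral.integral_mono_on zero_le_one hintc (hHint _ hmem12) hle
    rw [intervalIntegral.integral_add (hint1.const_mul a) (hint2.const_mul b),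
      intervalIntegral.integral_const_mul, intervalIntegral.integral_const_mul] at hcompare
    nlinarith [mul_le_mul_of_nonneg_left hcompare hcnn]
  -- a.e. nonzero on [0,1]
  have hae : ∀ᵐ t ∂((volume : Measure ℝ).restrict (Icc (0:ℝ) 1)), t ≠ 0 := by
    refine ae_restrict_of_ae ?_
    rw [ae_iff]
    simp [not_not]
  -- main pointwise bound
  have hmain : ∀ y ∈ S, U x + (f y - ⟪gU x, y⟫) ≤ Real.exp 1 / (Real.exp 1 - 1) * f x := by
    intro y hy
    have hstep : ∀ s ∈ Ioc (0:ℝ) 1, U x + (f y - ⟪gU x, y⟫) ≤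
        Real.exp 1 / (Real.exp 1 - 1) * f x +
          (Real.exp 1 / (Real.exp 1 - 1) * (s * ⟪gf x, y⟫) + (U x - U (x + s • y))) := by
      intro s hs
      set z : EuclideanSpace ℝ (Fin m) := x + s • y with hzdef
      have hzS : z ∈ S := by
        intro i
        have he : z i = x i + s * y i := rfl
        rw [he]
        exact add_nonneg (hx i) (mul_nonneg hs.1.le (hy i))
      have hzx : z - x = s • y := by rw [hzdef]; exact add_sub_cancel_left x _
      -- monotonicity of the inner-product integrand
      have hR'mono0 : ∀ t₁ ∈ Ioc (0:ℝ) 1, ∀ t₂ ∈ Ioc (0:ℝ) 1, t₁ ≤ t₂ →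
          ⟪gf (t₁⁻¹ • z), y⟫ ≤ ⟪gf (t₂⁻¹ • z), y⟫ := by
        intro t₁ h₁ t₂ h₂ h12
        refine hinnermono y hy _ _ (fun i => ?_)
        refine hganti (t₂⁻¹ • z) (t₁⁻¹ • z) (hsmulS _ (inv_nonneg.2 h₂.1.le) z hzS)
          (fun j => ?_) i
        show t₂⁻¹ * z j ≤ t₁⁻¹ * z j
        exact mul_le_mul_of_nonneg_right (inv_anti₀ h₁.1 h12) (hzS j)
      have hR'nn : ∀ t ∈ Ioc (0:ℝ) 1, 0 ≤ ⟪gf (t⁻¹ • z), y⟫ := by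
        intro t ht
        have h2 := hinnermono y hy 0 (gf (t⁻¹ • z))
          (fun i => by simpa using hgfnn _ (hsmulS _ (inv_nonneg.2 ht.1.le) z hzS) i)
        rwa [inner_zero_left] at h2
      have hR'int : IntervalIntegrable
          (fun t : ℝ => Real.exp t * ⟪gf (t⁻¹ • z), y⟫) volume 0 1 := by
        have hmono0 : MonotoneOn (fun t : ℝ =>
            if t = 0 then 0 else Real.exp t * ⟪gf (t⁻¹ • z), y⟫) (uIcc (0:ℝ) 1) := by
          rw [uIcc_of_le zero_le_one]
          intro t₁ h₁ t₂ h₂ h12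
          dsimp only
          rcases eq_or_ne t₁ 0 with rfl | h1ne
          · rw [if_pos rfl]
            rcases eq_or_ne t₂ 0 with rfl | h2ne
            · rw [if_pos rfl]
            · rw [if_neg h2ne]
              exact mul_nonneg (Real.exp_pos _).le
                (hR'nn t₂ ⟨lt_of_le_of_ne h₂.1 (Ne.symm h2ne), h₂.2⟩)
          · have h1pos : 0 < t₁ := lt_of_le_of_ne h₁.1 (Ne.symm h1ne)
            have h2pos : 0 < t₂ := lt_of_lt_of_le h1pos h12
            rw [if_neg h1ne, if_neg h2pos.ne']
            exact mul_le_mul (Real.exp_le_exp.2 h12)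
              (hR'mono0 t₁ ⟨h1pos, h₁.2⟩ t₂ ⟨h2pos, h₂.2⟩ h12)
              (hR'nn t₁ ⟨h1pos, h₁.2⟩) (Real.exp_pos t₂).le
        refine (hmono0.intervalIntegrable).congr ?_
        have huIoc : uIoc (0:ℝ) 1 = Ioc 0 1 := uIoc_of_le zero_le_one
        rw [huIoc]
        intro t ht
        dsimp only
        rw [if_neg ht.1.ne']
      -- step 1 : concavity of U
      have hstep1 : U z ≤ U x + s * ⟪gU x, y⟫ := by
        have h2 := concave_grad_ineq hUconc hxS hzS (hgU x hx)
        rwa [hzx, real_inner_smul_right] at h2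
      -- A1 : comparison of difference integrand
      have hHsub : IntervalIntegrable (fun t : ℝ =>
          Real.exp t * (t * f (t⁻¹ • z)) - Real.exp t * (t * f (t⁻¹ • x))) volume 0 1 :=
        (hHint z hzS).sub (hHint x hxS)
      have hA1 : (∫ t in (0:ℝ)..1, s * (Real.exp t * ⟪gf (t⁻¹ • z), y⟫)) ≤
          ∫ t in (0:ℝ)..1,
            (Real.exp t * (t * f (t⁻¹ • z)) - Real.exp t * (t * f (t⁻¹ • x))) := by
        refine intervalIntegral.integral_mono_ae_restrict zero_le_one
          (hR'int.const_mul s) hHsub ?_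
        filter_upwards [hae, ae_restrict_mem measurableSet_Icc] with t htne htIcc
        have htpos : 0 < t := lt_of_le_of_ne htIcc.1 (Ne.symm htne)
        have hmemz : t⁻¹ • z ∈ S := hsmulS _ (inv_nonneg.2 htpos.le) z hzS
        have hmemx : t⁻¹ • x ∈ S := hsmulS _ (inv_nonneg.2 htpos.le) x hxS
        have hgi := concave_grad_ineq hconc hmemz hmemx (hgrad _ hmemz)
        have he : t⁻¹ • x - t⁻¹ • z = (-(t⁻¹ * s)) • y := by
          rw [hzdef, smul_add]
          module
        rw [he, real_inner_smul_right] at hgi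
        have hsc : s * ⟪gf (t⁻¹ • z), y⟫ ≤ t * f (t⁻¹ • z) - t * f (t⁻¹ • x) := by
          have h3 := mul_le_mul_of_nonneg_left hgi htpos.le
          have he2 : t * (f (t⁻¹ • z) + -(t⁻¹ * s) * ⟪gf (t⁻¹ • z), y⟫)
              = t * f (t⁻¹ • z) - s * ⟪gf (t⁻¹ • z), y⟫ := by
            field_simp
            ring
          rw [he2] at h3
          linarith
        have h4 := mul_le_mul_of_nonneg_left hsc (Real.exp_pos t).le
        nlinarith [h4]
      -- key calculus facts at z
      obtain ⟨hQint, hQsum⟩ := hkeycalc z hzS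
      have hexpint : IntervalIntegrable (fun t : ℝ => Real.exp t * f y) volume 0 1 :=
        (Real.continuous_exp.mul continuous_const).intervalIntegrable 0 1
      have hA5 : (∫ t in (0:ℝ)..1, (Real.exp t * f y - Real.exp t * ⟪gf (t⁻¹ • z), y⟫)) ≤
          ∫ t in (0:ℝ)..1, Real.exp t * (f (t⁻¹ • z) - t⁻¹ * ⟪gf (t⁻¹ • z), z⟫) := by
        refine intervalIntegral.integral_mono_ae_restrict zero_le_one
          (hexpint.sub hR'int) hQint ?_
        filter_upwards [hae, ae_restrict_mem measurableSet_Icc] with t htne htIcc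
        have htpos : 0 < t := lt_of_le_of_ne htIcc.1 (Ne.symm htne)
        have hmemz : t⁻¹ • z ∈ S := hsmulS _ (inv_nonneg.2 htpos.le) z hzS
        have hgi := concave_grad_ineq hconc hmemz hy (hgrad _ hmemz)
        rw [inner_sub_right, real_inner_smul_right] at hgi
        have h3 := mul_le_mul_of_nonneg_left
          (show f y - ⟪gf (t⁻¹ • z), y⟫ ≤ f (t⁻¹ • z) - t⁻¹ * ⟪gf (t⁻¹ • z), z⟫ by linarith)
          (Real.exp_pos t).le
        nlinarith [h3]
      -- numeric bookkeeping
      have hIRint := hR'int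
      have hIR : (∫ t in (0:ℝ)..1, (Real.exp t * f y - Real.exp t * ⟪gf (t⁻¹ • z), y⟫))
          = (Real.exp 1 - 1) * f y - ∫ t in (0:ℝ)..1, Real.exp t * ⟪gf (t⁻¹ • z), y⟫ := by
        rw [intervalIntegral.integral_sub hexpint hR'int]
        congr 1
        rw [intervalIntegral.integral_mul_const, integral_exp, Real.exp_zero]
      have hIA1 : (∫ t in (0:ℝ)..1, s * (Real.exp t * ⟪gf (t⁻¹ • z), y⟫))
          = s * ∫ t in (0:ℝ)..1, Real.exp t * ⟪gf (t⁻¹ • z), y⟫ :=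
        intervalIntegral.integral_const_mul s _
      have hIsub : (∫ t in (0:ℝ)..1,
            (Real.exp t * (t * f (t⁻¹ • z)) - Real.exp t * (t * f (t⁻¹ • x))))
          = (∫ t in (0:ℝ)..1, Real.exp t * (t * f (t⁻¹ • z)))
            - ∫ t in (0:ℝ)..1, Real.exp t * (t * f (t⁻¹ • x)) :=
        intervalIntegral.integral_sub (hHint z hzS) (hHint x hxS)
      have hF5 : f z ≤ f x + s * ⟪gf x, y⟫ := by
        have h2 := concave_grad_ineq hconc hxS hzS (hgrad x hxS)
        rwa [hzx, real_inner_smul_right] at h2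
      -- abbreviations
      set IR : ℝ := ∫ t in (0:ℝ)..1, Real.exp t * ⟪gf (t⁻¹ • z), y⟫ with hIRdef
      set IHz : ℝ := ∫ t in (0:ℝ)..1, Real.exp t * (t * f (t⁻¹ • z)) with hIHzdef
      set IHx : ℝ := ∫ t in (0:ℝ)..1, Real.exp t * (t * f (t⁻¹ • x)) with hIHxdef
      set IQ : ℝ := ∫ t in (0:ℝ)..1,
        Real.exp t * (f (t⁻¹ • z) - t⁻¹ * ⟪gf (t⁻¹ • z), z⟫) with hIQdef
      rw [hIA1] at hA1
      rw [hIsub] at hA1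
      rw [hIR] at hA5
      -- division facts
      have hUz : U z = (Real.exp 1 - 1)⁻¹ * IHz := hU z
      have hUx : U x = (Real.exp 1 - 1)⁻¹ * IHx := hU x
      have hce : (Real.exp 1 - 1)⁻¹ * (Real.exp 1 - 1) = 1 := inv_mul_cancel₀ hem1.ne'
      have hdiv : Real.exp 1 / (Real.exp 1 - 1) = Real.exp 1 * (Real.exp 1 - 1)⁻¹ :=
        div_eq_mul_inv _ _
      -- derive ⟪gU x, y⟫ ≥ c * IR
      have hgUy : (Real.exp 1 - 1)⁻¹ * IR ≤ ⟪gU x, y⟫ := by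
        have h2 : s * ((Real.exp 1 - 1)⁻¹ * IR) ≤ s * ⟪gU x, y⟫ := by
          have h3 := mul_le_mul_of_nonneg_left hA1 hcnn
          rw [hUz, hUx] at hstep1
          nlinarith [h3]
        exact le_of_mul_le_mul_left h2 hs.1
      -- derive f y - c * IR ≤ c * IQ
      have hfy : f y - (Real.exp 1 - 1)⁻¹ * IR ≤ (Real.exp 1 - 1)⁻¹ * IQ := by
        have h3 := mul_le_mul_of_nonneg_left hA5 hcnn
        have h4 : (Real.exp 1 - 1)⁻¹ * ((Real.exp 1 - 1) * f y - IR)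
            = f y - (Real.exp 1 - 1)⁻¹ * IR := by
          rw [mul_sub, ← mul_assoc, hce, one_mul]
        rw [h4] at h3
        exact h3
      -- derive c * IQ ≤ e/(e-1) f z - U z
      have hQb : (Real.exp 1 - 1)⁻¹ * IQ ≤ Real.exp 1 / (Real.exp 1 - 1) * f z - U z := by
        have h3 := mul_le_mul_of_nonneg_left hQsum hcnn
        rw [hUz, hdiv]
        nlinarith [h3]
      have hfz : Real.exp 1 / (Real.exp 1 - 1) * f z
          ≤ Real.exp 1 / (Real.exp 1 - 1) * f x
            + Real.exp 1 / (Real.exp 1 - 1) * (s * ⟪gf x, y⟫) := by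
        have hpos : 0 ≤ Real.exp 1 / (Real.exp 1 - 1) :=
          div_nonneg (Real.exp_pos 1).le hem1.le
        nlinarith [mul_le_mul_of_nonneg_left hF5 hpos]
      linarith
    -- pass to the limit s → 0⁺
    have hUc : ContinuousAt U x := (hgU x hx).differentiableAt.continuousAt
    have hlim : Tendsto (fun s : ℝ => Real.exp 1 / (Real.exp 1 - 1) * f x +
        (Real.exp 1 / (Real.exp 1 - 1) * (s * ⟪gf x, y⟫) + (U x - U (x + s • y))))
        (𝓝[>] (0:ℝ)) (𝓝 (Real.exp 1 / (Real.exp 1 - 1) * f x)) := by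
      have hline : Continuous (fun s : ℝ => x + s • y) := by continuity
      have h1 : Tendsto (fun s : ℝ => U (x + s • y)) (𝓝 (0:ℝ)) (𝓝 (U x)) := by
        have h2 : Tendsto (fun s : ℝ => x + s • y) (𝓝 (0:ℝ)) (𝓝 x) := by
          have := hline.tendsto 0
          simpa using this
        exact Filter.Tendsto.comp hUc h2
      have h3 : Tendsto (fun s : ℝ => Real.exp 1 / (Real.exp 1 - 1) * f x +
          (Real.exp 1 / (Real.exp 1 - 1) * (s * ⟪gf x, y⟫) + (U x - U (x + s • y))))
          (𝓝 (0:ℝ)) (𝓝 (Real.exp 1 / (Real.exp 1 - 1) * f x +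
            (Real.exp 1 / (Real.exp 1 - 1) * (0 * ⟪gf x, y⟫) + (U x - U x)))) := by
        refine tendsto_const_nhds.add (Tendsto.add ?_ (tendsto_const_nhds.sub h1))
        exact (tendsto_const_nhds.mul ((tendsto_id.mul tendsto_const_nhds)))
      have h4 : Real.exp 1 / (Real.exp 1 - 1) * f x +
          (Real.exp 1 / (Real.exp 1 - 1) * (0 * ⟪gf x, y⟫) + (U x - U x))
          = Real.exp 1 / (Real.exp 1 - 1) * f x := by ring
      rw [h4] at h3
      exact h3.mono_left nhdsWithin_le_nhds
    refine ge_of_tendsto hlim ?_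
    filter_upwards [Ioc_mem_nhdsGT one_pos] with s hs using hstep s hs
  -- conclude via sSup
  rw [hfhat]
  have hUb : U x ≤ Real.exp 1 / (Real.exp 1 - 1) * f x := by
    have h2 := hmain 0 h0S
    simpa [hf0, inner_zero_right] using h2
  have hsup : sSup ((fun v => f v - ⟪gU x, v⟫) '' S)
      ≤ Real.exp 1 / (Real.exp 1 - 1) * f x - U x := by
    refine Real.sSup_le ?_ (by linarith)
    rintro w ⟨v, hv, rfl⟩
    have h2 := hmain v hv
    dsimp only
    linarith
  linarith
end
end

section
/- The greedy algorithm is (1/2)-competitive for concave diminishing-returns maximization: let f : ℝ_{≥0}^m → ℝ_{≥0} be a differentiable CDR-valuation (f(0)=0, concave, monotone, ∇f coordinatewise non-increasing). If x, x* ∈ ℝ_{≥0}^m with ⟨∇f(x), x⟩ ≥ ⟨∇f(x), x*⟩, then 2f(x) ≥ f(x*). -/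
open RealInnerProductSpace

noncomputable section

lemma concave_grad_ineq_s18 {m : ℕ} {f : EuclideanSpace ℝ (Fin m) → ℝ}
    {s : Set (EuclideanSpace ℝ (Fin m))}
    (hconc : ConcaveOn ℝ s f) {g x y : EuclideanSpace ℝ (Fin m)}
    (hg : HasGradientAt f g x) (hx : x ∈ s) (hy : y ∈ s) :
    f y ≤ f x + ⟪g, y - x⟫ := by
  set v := y - x with hv
  have hφ : HasDerivAt (fun t : ℝ => f (x + t • v)) ⟪g, v⟫ 0 := by
    have h1 : HasDerivAt (fun t : ℝ => x + t • v) v 0 := by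
      simpa using ((hasDerivAt_id (0:ℝ)).smul_const v).const_add x
    have h2 : HasFDerivAt f ((InnerProductSpace.toDual ℝ _) g) (x + (0:ℝ) • v) := by
      simpa using hg.hasFDerivAt
    have := h2.comp_hasDerivAt 0 h1
    simp at this
    exact this
  rw [hasDerivAt_iff_tendsto_slope] at hφ
  have htend : Filter.Tendsto (slope (fun t : ℝ => f (x + t • v)) 0)
      (nhdsWithin 0 (Set.Ioi 0)) (nhds ⟪g, v⟫) :=
    hφ.mono_left (nhdsWithin_mono 0 (fun t ht => ne_of_gt ht))
  have hev : ∀ᶠ t in nhdsWithin (0:ℝ) (Set.Ioi 0),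
      f y - f x ≤ slope (fun t : ℝ => f (x + t • v)) 0 t := by
    filter_upwards [Ioc_mem_nhdsGT_of_mem (Set.left_mem_Ico.2 one_pos)] with t ht
    obtain ⟨ht0, ht1⟩ := ht
    have hmem : x + t • v ∈ s := by
      have := hconc.1 hx hy (by linarith : (0:ℝ) ≤ 1 - t) ht0.le (by ring)
      convert this using 1
      rw [hv]; module
    have hcc := hconc.2 hx hy (by linarith : (0:ℝ) ≤ 1 - t) ht0.le (by ring)
    have heq : (1 - t) • x + t • y = x + t • v := by rw [hv]; module
    rw [heq] at hcc
    simp only [slope, vsub_eq_sub, sub_zero, zero_smul, add_zero, smul_eq_mul]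
    simp only [smul_eq_mul] at hcc
    calc f y - f x = t⁻¹ * (t * (f y - f x)) := by field_simp
      _ ≤ t⁻¹ * (f (x + t • v) - f x) := by
          apply mul_le_mul_of_nonneg_left (by nlinarith) (by positivity)
  have := ge_of_tendsto htend hev
  linarith [this]

theorem stmt18 {m : ℕ} (f : EuclideanSpace ℝ (Fin m) → ℝ)
    (gf : EuclideanSpace ℝ (Fin m) → EuclideanSpace ℝ (Fin m))
    (hf0 : f 0 = 0)
    (hconc : ConcaveOn ℝ {x : EuclideanSpace ℝ (Fin m) | ∀ i, 0 ≤ x i} f)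
    (hnonneg : ∀ x : EuclideanSpace ℝ (Fin m), (∀ i, 0 ≤ x i) → 0 ≤ f x)
    (hmono : ∀ x y : EuclideanSpace ℝ (Fin m),
      (∀ i, 0 ≤ x i) → (∀ i, x i ≤ y i) → f x ≤ f y)
    (hgrad : ∀ y : EuclideanSpace ℝ (Fin m), (∀ i, 0 ≤ y i) → HasGradientAt f (gf y) y)
    (hganti : ∀ x y : EuclideanSpace ℝ (Fin m),
      (∀ i, 0 ≤ x i) → (∀ i, x i ≤ y i) → ∀ i, gf y i ≤ gf x i)
    (x xstar : EuclideanSpace ℝ (Fin m))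
    (hx : ∀ i, 0 ≤ x i) (hxstar : ∀ i, 0 ≤ xstar i)
    (hgreedy : ⟪gf x, xstar⟫ ≤ ⟪gf x, x⟫) :
    f xstar ≤ 2 * f x := by
  have key := concave_grad_ineq_s18 hconc (hgrad x hx) hx hxstar
  have hinner : ⟪gf x, xstar - x⟫ = ⟪gf x, xstar⟫ - ⟪gf x, x⟫ := inner_sub_right _ _ _
  have h0 := hnonneg x hx
  linarith
end
end
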